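/- arXiv:math/0104276 — 3 statements merged into one kernel-verified Lean document; each statement's English description precedes it below -/
import Mathlib

section
/- Let p* ⊆ 2^{<ω} be a tree with μ(lim(p*)) = 1/2 + 1/n* for some n* ≥ 1, and let m* be such that for all m ≥ m*, 1/2 + 1/n* ≤ |p* ∩ 2^m|/2^m ≤ 1/2 + 1/n* + 1/2^{n*+7}. If q₀, q₁ ⊆ p** are trees (where p** is the tree whose nodes below level m* agree with p* and which above level m* contains all extensions of nodes of p* at level m*) with μ(lim(q₀)) ≥ 1/2 + 3/(4n*) and μ(lim(q₁)) ≥ 1/2 + 3/(4n*), then μ(lim(q₀) ∩ lim(q₁)) > 1/2. -/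
open MeasureTheory Filter
open scoped ENNReal

/-- The standard product ("coin-flipping") measure on Cantor space `ℕ → Bool`:
a probability measure giving each cylinder `[s]` measure `2^{-|s|}`. -/
def IsCantorMeasure (μ : Measure (ℕ → Bool)) : Prop :=
  IsProbabilityMeasure μ ∧
    ∀ s : List Bool,
      μ {ρ | ∀ i : Fin s.length, ρ i = s.get i} = 1 / 2 ^ s.length

def IsTree (T : Set (List Bool)) : Prop :=
  ∀ s t : List Bool, s <+: t → t ∈ T → s ∈ T

/-- The set of infinite branches of a tree `T ⊆ 2^{<ω}`. -/
def branches (T : Set (List Bool)) : Set (ℕ → Bool) :=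
  {ρ | ∀ n : ℕ, (List.ofFn fun i : Fin n => ρ i) ∈ T}

/-- The number of nodes of `T` at level `m`. -/
noncomputable def levelCard (T : Set (List Bool)) (m : ℕ) : ℕ :=
  (T ∩ {l | l.length = m}).ncard

-- cylinder
def Cyl (s : List Bool) : Set (ℕ → Bool) :=
  {ρ | ∀ i : Fin s.length, ρ i = s.get i}

lemma measurable_branches (T : Set (List Bool)) : MeasurableSet (branches T) := by
  have : branches T = ⋂ n : ℕ,
      (fun ρ : ℕ → Bool => (fun i : Fin n => ρ i)) ⁻¹' {g : Fin n → Bool | List.ofFn g ∈ T} := by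
    ext ρ; simp [branches]
  rw [this]
  refine MeasurableSet.iInter fun n => ?_
  exact (measurable_pi_lambda _ fun i => measurable_pi_apply _)
    ((Set.to_countable _).measurableSet)

lemma branches_mono {S T : Set (List Bool)} (h : S ⊆ T) : branches S ⊆ branches T :=
  fun ρ hρ n => h (hρ n)

lemma ofFn_eq_of_cyl {s : List Bool} {ρ : ℕ → Bool} (h : ρ ∈ Cyl s) :
    (List.ofFn fun i : Fin s.length => ρ i) = s := by
  apply List.ext_get (by simp)
  intro n h1 h2
  simp only [List.get_ofFn]
  exact h ⟨n, h2⟩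

lemma take_ofFn (ρ : ℕ → Bool) (k n : ℕ) (h : k ≤ n) :
    (List.ofFn fun i : Fin n => ρ i).take k = List.ofFn fun i : Fin k => ρ i := by
  apply List.ext_get (by simp [h])
  intro m h1 h2
  simp [List.getElem_take, List.get_ofFn]

theorem stmt_0 (μ : Measure (ℕ → Bool)) (hμ : IsCantorMeasure μ)
    (nstar : ℕ) (hn : 1 ≤ nstar) (pstar : Set (List Bool))
    (hps : IsTree pstar)
    (hmeas : μ (branches pstar) = 1/2 + 1/(nstar : ℝ≥0∞))
    (mstar : ℕ)
    (hm : ∀ m ≥ mstar,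
      1/2 + 1/(nstar : ℝ≥0∞) ≤ (levelCard pstar m : ℝ≥0∞) / 2^m ∧
      (levelCard pstar m : ℝ≥0∞) / 2^m ≤ 1/2 + 1/(nstar : ℝ≥0∞) + 1/2^(nstar+7))
    (q0 q1 : Set (List Bool)) (hq0 : IsTree q0) (hq1 : IsTree q1)
    (hq0sub : q0 ⊆ {l | (l.length ≤ mstar ∧ l ∈ pstar) ∨
      (mstar < l.length ∧ l.take mstar ∈ pstar)})
    (hq1sub : q1 ⊆ {l | (l.length ≤ mstar ∧ l ∈ pstar) ∨
      (mstar < l.length ∧ l.take mstar ∈ pstar)})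
    (hm0 : 1/2 + 3/(4 * (nstar : ℝ≥0∞)) ≤ μ (branches q0))
    (hm1 : 1/2 + 3/(4 * (nstar : ℝ≥0∞)) ≤ μ (branches q1)) :
    1/2 < μ (branches q0 ∩ branches q1) := by
  set S : Set (List Bool) := {l | (l.length ≤ mstar ∧ l ∈ pstar) ∨
      (mstar < l.length ∧ l.take mstar ∈ pstar)} with hS
  set F : Set (List Bool) := pstar ∩ {l | l.length = mstar} with hF
  have hFfin : F.Finite := (List.finite_length_eq Bool mstar).subset (by
    intro l hl; exact hl.2)
  -- branches S is a union of cylinders over F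
  have hbS : branches S = ⋃ s ∈ F, Cyl s := by
    ext ρ
    constructor
    · intro hρ
      have h1 := hρ mstar
      rcases h1 with ⟨_, h⟩ | ⟨h, _⟩
      · refine Set.mem_biUnion (show (List.ofFn fun i : Fin mstar => ρ i) ∈ F from ⟨h, by simp⟩) ?_
        intro i
        simp [List.get_ofFn]
      · simp at h
    · intro hρ
      rcases Set.mem_iUnion₂.1 hρ with ⟨s, hsF, hcyl⟩
      have hlen : s.length = mstar := hsF.2
      have heq : (List.ofFn fun i : Fin mstar => ρ i) = s := by
        rw [← hlen]; exact ofFn_eq_of_cyl hcyl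
      intro n
      rcases le_or_gt n mstar with h | h
      · left
        refine ⟨by simpa using h, ?_⟩
        have : (List.ofFn fun i : Fin n => ρ i) = s.take n := by
          rw [← heq, take_ofFn ρ n mstar h]
        rw [this]
        exact hps _ _ (List.take_prefix _ _) (heq ▸ hsF.1)
      · right
        refine ⟨by simp [h], ?_⟩
        rw [take_ofFn ρ mstar n h.le, heq]
        exact hsF.1
  -- measure of branches S
  have hcylμ : ∀ s ∈ F, μ (Cyl s) = 1 / 2 ^ mstar := by
    intro s hs
    calc μ (Cyl s) = 1 / 2 ^ s.length := hμ.2 s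
      _ = 1 / 2 ^ mstar := by rw [hs.2]
  have hμS : μ (branches S) ≤ 1/2 + 1/(nstar : ℝ≥0∞) + 1/2^(nstar+7) := by
    have hfs := hFfin.toFinset
    have hU : branches S = ⋃ s ∈ hFfin.toFinset, Cyl s := by
      rw [hbS]; congr 1; ext s; simp
    calc μ (branches S) ≤ ∑ s ∈ hFfin.toFinset, μ (Cyl s) := by
          rw [hU]; exact measure_biUnion_finset_le _ _
      _ = (levelCard pstar mstar : ℝ≥0∞) / 2 ^ mstar := by
          rw [Finset.sum_congr rfl (fun s hs => hcylμ s (hFfin.mem_toFinset.1 hs))]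
          rw [Finset.sum_const, nsmul_eq_mul]
          rw [levelCard, ← hF, Set.ncard_eq_toFinset_card F hFfin, mul_one_div]
      _ ≤ _ := (hm mstar le_rfl).2
  -- arithmetic
  set N : ℝ≥0∞ := (nstar : ℝ≥0∞) with hNdef
  have hN0 : N ≠ 0 := Nat.cast_ne_zero.2 (by omega)
  have hNt : N ≠ ⊤ := ENNReal.natCast_ne_top _
  have h2 : (2:ℝ≥0∞) ≠ 0 := by norm_num
  have h2t : (2:ℝ≥0∞) ≠ ⊤ := by norm_num
  have hεlt : (1:ℝ≥0∞)/2^(nstar+7) < 1/(2*N) := by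
    rw [one_div, one_div, ENNReal.inv_lt_inv]
    have hnat : 2*nstar < 2^(nstar+7) := by
      calc 2*nstar < 2*2^nstar := by
            have := Nat.lt_two_pow_self (n := nstar); omega
        _ = 2^(nstar+1) := by ring
        _ ≤ 2^(nstar+7) := Nat.pow_le_pow_right (by norm_num) (by omega)
    calc 2*N = ((2*nstar : ℕ) : ℝ≥0∞) := by push_cast; rfl
      _ < ((2^(nstar+7) : ℕ) : ℝ≥0∞) := by exact_mod_cast Nat.cast_lt.2 hnat
      _ = 2^(nstar+7) := by push_cast; rfl
  have e1 : (1:ℝ≥0∞)/N = 2/(2*N) := by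
    rw [show (2:ℝ≥0∞)/(2*N) = 2*1/(2*N) by ring_nf, ENNReal.mul_div_mul_left 1 N h2 h2t]
  have e2 : (6:ℝ≥0∞)/(4*N) = 3/(2*N) := by
    rw [show (6:ℝ≥0∞) = 2*3 by norm_num, show (4:ℝ≥0∞)*N = 2*(2*N) by ring,
      ENNReal.mul_div_mul_left 3 (2*N) h2 h2t]
  have key2 : (1:ℝ≥0∞)/N + 1/(2*N) = 3/(4*N) + 3/(4*N) := by
    rw [e1, ENNReal.div_add_div_same, ENNReal.div_add_div_same]
    norm_num [e2]
  have h1Nt : (1:ℝ≥0∞)/N ≠ ⊤ := by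
    simp [ENNReal.div_eq_top, hN0]
  -- combine
  have hAB : branches q0 ∪ branches q1 ⊆ branches S :=
    Set.union_subset (branches_mono hq0sub) (branches_mono hq1sub)
  have hUle : μ (branches q0 ∪ branches q1) ≤ 1/2 + 1/N + 1/2^(nstar+7) :=
    le_trans (measure_mono hAB) hμS
  have key : μ (branches q0 ∪ branches q1) + μ (branches q0 ∩ branches q1)
      = μ (branches q0) + μ (branches q1) :=
    measure_union_add_inter _ (measurable_branches q1)
  have hfin : μ (branches q0 ∪ branches q1) ≠ ⊤ := by
    have : IsProbabilityMeasure μ := hμ.1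
    exact measure_ne_top μ _
  rw [← ENNReal.add_lt_add_iff_left hfin, key]
  calc μ (branches q0 ∪ branches q1) + 1/2
      ≤ (1/2 + 1/N + 1/2^(nstar+7)) + 1/2 := add_le_add_left hUle _
    _ = (1/2 + 1/2) + (1/N + 1/2^(nstar+7)) := by ring
    _ = 1 + (1/N + 1/2^(nstar+7)) := by rw [ENNReal.add_halves]
    _ < 1 + (1/N + 1/(2*N)) := by
        refine ENNReal.add_lt_add_left (by norm_num) (ENNReal.add_lt_add_left h1Nt hεlt)
    _ = 1 + (3/(4*N) + 3/(4*N)) := by rw [key2]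
    _ = (1/2 + 1/2) + (3/(4*N) + 3/(4*N)) := by rw [ENNReal.add_halves]
    _ = (1/2 + 3/(4*N)) + (1/2 + 3/(4*N)) := by ring
    _ ≤ μ (branches q0) + μ (branches q1) := add_le_add hm0 hm1
end

section
/- Let T ⊆ 2^{<ω} be a tree with no leaves such that μ(lim(T)) > 0 and suppose lim_{n→∞} |T ∩ 2^n|/2^n exists and is positive. Then lim_{n→∞} μ({ρ' ∈ 2^ω : ∃ρ ∈ lim(T), ρ'(k) = ρ(k) for all k ≥ n}) = 1. -/
open MeasureTheory Filter
open scoped ENNReal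

namespace Stmt1Aux

def restr (ρ : ℕ → Bool) (n : ℕ) : List Bool := List.ofFn fun i : Fin n => ρ i

@[simp] lemma length_restr (ρ : ℕ → Bool) (n : ℕ) : (restr ρ n).length = n := by
  simp [restr]

lemma mem_cyl (s : List Bool) (ρ : ℕ → Bool) :
    (∀ i : Fin s.length, ρ i = s.get i) ↔ restr ρ s.length = s := by
  constructor
  · intro h
    apply List.ext_get (by simp)
    intro i h1 h2
    simp only [restr, List.get_ofFn]
    exact (h ⟨i, h2⟩).symm ▸ rfl
  · intro h i
    have := List.get_of_eq h ⟨i, by simp⟩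
    simpa [restr] using this

lemma measurable_cyl (s : List Bool) :
    MeasurableSet {ρ : ℕ → Bool | ∀ i : Fin s.length, ρ i = s.get i} := by
  have : {ρ : ℕ → Bool | ∀ i : Fin s.length, ρ i = s.get i} =
      ⋂ i : Fin s.length, (fun ρ : ℕ → Bool => ρ i) ⁻¹' {s.get i} := by
    ext ρ; simp
  rw [this]
  exact MeasurableSet.iInter fun i => (measurable_pi_apply _) (by trivial)

lemma finite_len (n : ℕ) : {l : List Bool | l.length = n}.Finite := by
  have : {l : List Bool | l.length = n} ⊆ Set.range (fun f : Fin n → Bool => List.ofFn f) := by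
    rintro l (hl : l.length = n)
    subst hl
    exact ⟨l.get, List.ofFn_get l⟩
  exact (Set.finite_range _).subset this

lemma ncard_len (n : ℕ) : {l : List Bool | l.length = n}.ncard = 2 ^ n := by
  have e : (Fin n → Bool) ≃ {l : List Bool | l.length = n} :=
    { toFun := fun f => ⟨List.ofFn f, by simp⟩
      invFun := fun l => fun i => l.1.get (Fin.cast l.2.symm i)
      left_inv := fun f => by ext i; simp
      right_inv := fun l => by
        ext1
        apply List.ext_get (by simp; exact Eq.symm l.2)
        intro i h1 h2
        simp }
  rw [← Nat.card_coe_set_eq, ← Nat.card_congr e]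
  simp [Nat.card_eq_fintype_card]

lemma measure_restr_mem (μ : Measure (ℕ → Bool)) (hμ : IsCantorMeasure μ)
    (n : ℕ) (S : Set (List Bool)) (hS : ∀ l ∈ S, l.length = n) :
    μ {ρ | restr ρ n ∈ S} = S.ncard * (2 ^ n)⁻¹ := by
  classical
  have hfin : S.Finite := (finite_len n).subset hS
  have key : {ρ : ℕ → Bool | restr ρ n ∈ S} =
      ⋃ s ∈ hfin.toFinset, {ρ : ℕ → Bool | ∀ i : Fin s.length, ρ i = s.get i} := by
    ext ρ
    simp only [Set.mem_setOf_eq, Set.mem_iUnion, Set.Finite.mem_toFinset]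
    constructor
    · intro h
      refine ⟨restr ρ n, h, ?_⟩
      rw [mem_cyl, length_restr]
    · rintro ⟨s, hs, hcyl⟩
      rw [mem_cyl] at hcyl
      have hlen : s.length = n := hS s hs
      rw [← hlen, hcyl]
      exact hs
  have hdisj : (hfin.toFinset : Set (List Bool)).PairwiseDisjoint
      (fun s => {ρ : ℕ → Bool | ∀ i : Fin s.length, ρ i = s.get i}) := by
    intro s hs t ht hst
    simp only [Set.Finite.coe_toFinset] at hs ht
    refine Set.disjoint_left.2 fun ρ hρs hρt => hst ?_
    rw [Set.mem_setOf_eq, mem_cyl] at hρs hρt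
    rw [← hρs, ← hρt, hS s hs, hS t ht]
  rw [key, measure_biUnion_finset hdisj (fun s _ => measurable_cyl s)]
  have : ∀ s ∈ hfin.toFinset,
      μ {ρ : ℕ → Bool | ∀ i : Fin s.length, ρ i = s.get i} = (2 ^ n : ℝ≥0∞)⁻¹ := by
    intro s hs
    rw [hμ.2 s, hS s (hfin.mem_toFinset.1 hs), one_div]
  rw [Finset.sum_congr rfl this, Finset.sum_const, Set.ncard_eq_toFinset_card S hfin,
    nsmul_eq_mul]

lemma ncard_sprod {α β : Type*} (A : Set α) (B : Set β) :
    (A ×ˢ B).ncard = A.ncard * B.ncard := by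
  rw [← Nat.card_coe_set_eq, ← Nat.card_coe_set_eq, ← Nat.card_coe_set_eq,
    Nat.card_congr (Equiv.Set.prod A B), Nat.card_prod]

def G (T : Set (List Bool)) (n m : ℕ) : Set (List Bool) :=
  {u | u.length = n + m ∧ ∃ σ : List Bool, σ.length = n ∧ σ ++ u.drop n ∈ T}

lemma counting (T : Set (List Bool)) (hT : IsTree T) (n m : ℕ) :
    2 ^ n * levelCard T (n + m) ≤ levelCard T n * (G T n m).ncard := by
  classical
  have hmaps : ∀ p ∈ ({l : List Bool | l.length = n} ×ˢ (T ∩ {l | l.length = n + m})),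
      ((p.2.take n, p.1 ++ p.2.drop n) : List Bool × List Bool) ∈
        ((T ∩ {l | l.length = n}) ×ˢ G T n m) := by
    rintro ⟨σ, v⟩ ⟨hσ : σ.length = n, hvT, hv : v.length = n + m⟩
    refine ⟨⟨hT _ v (List.take_prefix n v) hvT, ?_⟩, ?_, v.take n, ?_, ?_⟩
    · simp [List.length_take, hv]
    · simp [hσ, hv]
    · simp [List.length_take, hv]
    · have : (σ ++ v.drop n).drop n = v.drop n := by
        rw [← hσ, List.drop_left]
      rw [this, List.take_append_drop]
      exact hvT
  have hinj : Set.InjOn (fun p : List Bool × List Bool => (p.2.take n, p.1 ++ p.2.drop n))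
      ({l : List Bool | l.length = n} ×ˢ (T ∩ {l | l.length = n + m})) := by
    rintro ⟨σ₁, v₁⟩ ⟨hσ₁ : σ₁.length = n, _, hv₁ : v₁.length = n + m⟩
      ⟨σ₂, v₂⟩ ⟨hσ₂ : σ₂.length = n, _, hv₂ : v₂.length = n + m⟩ heq
    simp only [Prod.mk.injEq] at heq
    obtain ⟨h1, h2⟩ := heq
    obtain ⟨hσ, hdrop⟩ := List.append_inj h2 (hσ₁.trans hσ₂.symm)
    have hv : v₁ = v₂ := by
      rw [← List.take_append_drop n v₁, ← List.take_append_drop n v₂, h1, hdrop]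
    simp [hσ, hv]
  have htgt : ((T ∩ {l | l.length = n}) ×ˢ G T n m).Finite := by
    refine (((finite_len n).inter_of_right T).prod ((finite_len (n + m)).subset ?_))
    exact fun u hu => hu.1
  have := Set.ncard_le_ncard_of_injOn _ hmaps hinj htgt
  rw [ncard_sprod, ncard_sprod, ncard_len] at this
  simpa [levelCard] using this

lemma restr_add (ρ : ℕ → Bool) (n m : ℕ) :
    restr ρ (n + m) = restr ρ n ++ restr (fun k => ρ (n + k)) m := by
  simp [restr, List.ofFn_add]

lemma drop_restr (ρ : ℕ → Bool) (n m : ℕ) :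
    (restr ρ (n + m)).drop n = restr (fun k => ρ (n + k)) m := by
  rw [restr_add]
  have := List.drop_left (l₁ := restr ρ n) (l₂ := restr (fun k => ρ (n + k)) m)
  rwa [length_restr] at this

lemma restr_prefix (ρ : ℕ → Bool) {a b : ℕ} (h : a ≤ b) : restr ρ a <+: restr ρ b := by
  obtain ⟨m, rfl⟩ := Nat.exists_eq_add_of_le h
  rw [restr_add]
  exact List.prefix_append _ _

lemma prefix_append_left {l t t' : List Bool} (h : t <+: t') : l ++ t <+: l ++ t' := by
  obtain ⟨r, rfl⟩ := h
  exact ⟨r, by rw [List.append_assoc]⟩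

lemma A_eq_iInter (T : Set (List Bool)) (hT : IsTree T) (n : ℕ) :
    {ρ' : ℕ → Bool | ∃ ρ ∈ branches T, ∀ k, n ≤ k → ρ' k = ρ k} =
      ⋂ m : ℕ, {ρ' : ℕ → Bool | restr ρ' (n + m) ∈ G T n m} := by
  ext ρ'
  simp only [Set.mem_setOf_eq, Set.mem_iInter]
  constructor
  · rintro ⟨ρ, hρ, hagree⟩ m
    refine ⟨by simp, restr ρ n, by simp, ?_⟩
    have h1 : (restr ρ' (n + m)).drop n = restr (fun k => ρ (n + k)) m := by
      rw [drop_restr]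
      congr 1
      funext k
      exact hagree (n + k) (Nat.le_add_right n k)
    rw [h1, ← restr_add]
    exact hρ (n + m)
  · intro hmem
    have hS : ∀ m : ℕ, ∃ σ : List Bool, σ.length = n ∧
        σ ++ restr (fun k => ρ' (n + k)) m ∈ T := by
      intro m
      obtain ⟨-, σ, hσl, hσT⟩ := hmem m
      rw [drop_restr] at hσT
      exact ⟨σ, hσl, hσT⟩
    choose f hflen hfT using hS
    haveI : Finite ↥{l : List Bool | l.length = n} := (finite_len n).to_subtype
    obtain ⟨σ₀, hσ₀⟩ := Finite.exists_infinite_fiber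
      (fun m => (⟨f m, hflen m⟩ : {l : List Bool | l.length = n}))
    rw [Set.infinite_coe_iff] at hσ₀
    have hσ₀len : (σ₀ : List Bool).length = n := σ₀.2
    have hσ₀T : ∀ m : ℕ, (σ₀ : List Bool) ++ restr (fun k => ρ' (n + k)) m ∈ T := by
      intro m
      obtain ⟨m', hm'⟩ := (hσ₀.diff (Set.finite_lt_nat m)).nonempty
      have hfm' : f m' = (σ₀ : List Bool) := congrArg Subtype.val hm'.1
      have hmm' : m ≤ m' := not_lt.1 hm'.2
      refine hT _ _ (prefix_append_left (restr_prefix _ hmm')) ?_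
      rw [← hfm']
      exact hfT m'
    set ρ : ℕ → Bool := fun k =>
      if h : k < n then (σ₀ : List Bool).get ⟨k, by rw [hσ₀len]; exact h⟩ else ρ' k with hρdef
    have hrestrn : restr ρ n = (σ₀ : List Bool) := by
      apply List.ext_get (by simp [hσ₀len])
      intro i h1 h2
      simp only [restr, List.get_ofFn]
      have hi : i < n := by simpa using h1
      simp [hρdef, hi]
    refine ⟨ρ, ?_, ?_⟩
    · intro ℓ
      show restr ρ ℓ ∈ T
      rcases le_or_gt ℓ n with h | h
      · have hσT : (σ₀ : List Bool) ∈ T := by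
          have := hσ₀T 0
          simpa [restr] using this
        refine hT _ _ ?_ hσT
        rw [← hrestrn]
        exact restr_prefix ρ h
      · obtain ⟨m, rfl⟩ := Nat.exists_eq_add_of_le h.le
        rw [restr_add, hrestrn]
        have : restr (fun k => ρ (n + k)) m = restr (fun k => ρ' (n + k)) m := by
          congr 1
          funext k
          simp [hρdef]
        rw [this]
        exact hσ₀T m
    · intro k hk
      simp [hρdef, not_lt.2 hk]

lemma measurable_restr_mem (ℓ : ℕ) (S : Set (List Bool)) :
    MeasurableSet {ρ : ℕ → Bool | restr ρ ℓ ∈ S} := by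
  have h : {ρ : ℕ → Bool | restr ρ ℓ ∈ S} =
      ⋃ s ∈ S ∩ {l : List Bool | l.length = ℓ},
        {ρ : ℕ → Bool | ∀ i : Fin s.length, ρ i = s.get i} := by
    ext ρ
    simp only [Set.mem_setOf_eq, Set.mem_iUnion, exists_prop]
    constructor
    · intro hmem
      exact ⟨restr ρ ℓ, ⟨hmem, by simp⟩, by rw [mem_cyl, length_restr]⟩
    · rintro ⟨s, ⟨hsS, hsl⟩, hcyl⟩
      rw [mem_cyl] at hcyl
      rw [← hsl, hcyl]
      exact hsS
  rw [h]
  exact MeasurableSet.biUnion ((finite_len ℓ).inter_of_right S).countable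
    (fun s _ => measurable_cyl s)

lemma B_antitone (T : Set (List Bool)) (hT : IsTree T) (n : ℕ) :
    Antitone (fun m => {ρ' : ℕ → Bool | restr ρ' (n + m) ∈ G T n m}) := by
  intro m m' hmm' ρ' hρ'
  obtain ⟨-, σ, hσl, hσT⟩ := hρ'
  rw [drop_restr] at hσT
  refine ⟨by simp, σ, hσl, ?_⟩
  rw [drop_restr]
  exact hT _ _ (prefix_append_left (restr_prefix _ hmm')) hσT

end Stmt1Aux

theorem stmt_1 (μ : Measure (ℕ → Bool)) (hμ : IsCantorMeasure μ)
    (T : Set (List Bool)) (hT : IsTree T)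
    (hnoleaf : ∀ l ∈ T, ∃ b : Bool, l ++ [b] ∈ T)
    (hpos : 0 < μ (branches T))
    (L : ℝ) (hL : 0 < L)
    (hlim : Tendsto (fun n => (levelCard T n : ℝ) / 2 ^ n) atTop (nhds L)) :
    Tendsto
      (fun n => μ {ρ' | ∃ ρ ∈ branches T, ∀ k, n ≤ k → ρ' k = ρ k})
      atTop (nhds 1) := by
  classical
  open Stmt1Aux in
  haveI : IsProbabilityMeasure μ := hμ.1
  set c : ℕ → ℝ := fun n => (levelCard T n : ℝ) / 2 ^ n with hc
  -- every level is nonempty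
  obtain ⟨ρ₀, hρ₀⟩ : (branches T).Nonempty := nonempty_of_measure_ne_zero hpos.ne'
  have hK : ∀ n, 1 ≤ levelCard T n := by
    intro n
    have hfin : (T ∩ {l | l.length = n}).Finite :=
      (Stmt1Aux.finite_len n).inter_of_right T
    have : (T ∩ {l | l.length = n}).Nonempty :=
      ⟨Stmt1Aux.restr ρ₀ n, hρ₀ n, by simp⟩
    exact (Set.ncard_pos hfin).2 this
  have hcpos : ∀ n, 0 < c n := by
    intro n
    have h1 : (1 : ℝ) ≤ (levelCard T n : ℝ) := by exact_mod_cast hK n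
    positivity
  -- measure of the approximating sets
  have hμB : ∀ n m, μ {ρ' : ℕ → Bool | Stmt1Aux.restr ρ' (n + m) ∈ Stmt1Aux.G T n m} =
      ENNReal.ofReal (((Stmt1Aux.G T n m).ncard : ℝ) / 2 ^ (n + m)) := by
    intro n m
    rw [Stmt1Aux.measure_restr_mem μ hμ _ _ (fun l hl => hl.1)]
    rw [ENNReal.ofReal_div_of_pos (by positivity), div_eq_mul_inv, ENNReal.ofReal_natCast]
    congr 1
    rw [ENNReal.ofReal_pow (by norm_num)]
    norm_num
  -- the real lower bound
  have hlow : ∀ n m, c (n + m) / c n ≤ ((Stmt1Aux.G T n m).ncard : ℝ) / 2 ^ (n + m) := by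
    intro n m
    have hcount : (2 : ℝ) ^ n * (levelCard T (n + m) : ℝ) ≤
        (levelCard T n : ℝ) * ((Stmt1Aux.G T n m).ncard : ℝ) := by
      exact_mod_cast Stmt1Aux.counting T hT n m
    have hNpos : (0 : ℝ) < (levelCard T n : ℝ) := by exact_mod_cast hK n
    have heq : c (n + m) / c n =
        ((2 : ℝ) ^ n * (levelCard T (n + m) : ℝ)) / ((levelCard T n : ℝ) * 2 ^ (n + m)) := by
      rw [hc]
      field_simp
    have heq2 : ((Stmt1Aux.G T n m).ncard : ℝ) / 2 ^ (n + m) =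
        ((levelCard T n : ℝ) * ((Stmt1Aux.G T n m).ncard : ℝ)) /
          ((levelCard T n : ℝ) * 2 ^ (n + m)) := by
      rw [mul_div_mul_left _ _ hNpos.ne']
    rw [heq, heq2]
    exact div_le_div_of_nonneg_right hcount (by positivity) |>.trans_eq rfl
  -- lower bound on μ (A n)
  have hAle : ∀ n, ENNReal.ofReal (L / c n) ≤
      μ {ρ' : ℕ → Bool | ∃ ρ ∈ branches T, ∀ k, n ≤ k → ρ' k = ρ k} := by
    intro n
    have hAeq := Stmt1Aux.A_eq_iInter T hT n
    have htend : Tendsto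
        (fun m => μ {ρ' : ℕ → Bool | Stmt1Aux.restr ρ' (n + m) ∈ Stmt1Aux.G T n m})
        atTop (nhds (μ {ρ' : ℕ → Bool | ∃ ρ ∈ branches T, ∀ k, n ≤ k → ρ' k = ρ k})) := by
      rw [hAeq]
      exact tendsto_measure_iInter_atTop
        (fun m => (Stmt1Aux.measurable_restr_mem _ _).nullMeasurableSet)
        (Stmt1Aux.B_antitone T hT n) ⟨0, measure_ne_top μ _⟩
    have hshift : Tendsto (fun m => c (n + m)) atTop (nhds L) := by
      have := hlim.comp (tendsto_add_atTop_nat n)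
      simpa [Function.comp_def, add_comm] using this
    have htend2 : Tendsto (fun m => ENNReal.ofReal (c (n + m) / c n)) atTop
        (nhds (ENNReal.ofReal (L / c n))) :=
      (ENNReal.continuous_ofReal.tendsto _).comp (hshift.div_const _)
    refine le_of_tendsto_of_tendsto' htend2 htend (fun m => ?_)
    rw [hμB n m]
    exact ENNReal.ofReal_le_ofReal (hlow n m)
  -- squeeze
  have hlower : Tendsto (fun n => ENNReal.ofReal (L / c n)) atTop (nhds 1) := by
    have h1 : Tendsto (fun n => L / c n) atTop (nhds 1) := by
      have := (tendsto_const_nhds : Tendsto (fun _ : ℕ => L) atTop (nhds L)).div hlim hL.ne'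
      simpa [div_self hL.ne', Pi.div_def] using this
    have := (ENNReal.continuous_ofReal.tendsto _).comp h1
    simpa [Function.comp_def, ENNReal.ofReal_one] using this
  refine tendsto_of_tendsto_of_tendsto_of_le_of_le hlower tendsto_const_nhds hAle
    (fun n => prob_le_one)
end

section
/- A real η ∈ 2^ω is needed for a binary relation R (i.e., every R-adequate set Y contains some y with η Turing-computable from y) if and only if there exists x ∈ dom(R) such that for all y ∈ range(R), if x R y then η is Turing-reducible to y. -/
/-- Relativized partial recursiveness: partial functions recursive in the oracle `O`.
This mirrors Mathlib's `Nat.Partrec`, with an extra constructor for the oracle. -/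
inductive RecursiveInNat (O : ℕ → ℕ) : (ℕ →. ℕ) → Prop
  | zero : RecursiveInNat O (pure 0)
  | succ : RecursiveInNat O ↑Nat.succ
  | left : RecursiveInNat O ↑fun n : ℕ => n.unpair.1
  | right : RecursiveInNat O ↑fun n : ℕ => n.unpair.2
  | oracle : RecursiveInNat O ↑O
  | pair {f g : ℕ →. ℕ} : RecursiveInNat O f → RecursiveInNat O g →
      RecursiveInNat O fun n => Nat.pair <$> f n <*> g n
  | comp {f g : ℕ →. ℕ} : RecursiveInNat O f → RecursiveInNat O g →
      RecursiveInNat O fun n => g n >>= f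
  | prec {f g : ℕ →. ℕ} : RecursiveInNat O f → RecursiveInNat O g →
      RecursiveInNat O (Nat.unpaired fun a n =>
        n.rec (f a) fun y IH => do let i ← IH; g (Nat.pair a (Nat.pair y i)))
  | rfind {f : ℕ →. ℕ} : RecursiveInNat O f →
      RecursiveInNat O fun a => Nat.rfind fun n => (fun m => m = 0) <$> f (Nat.pair a n)

/-- Turing reducibility `η ≤_T ν` for elements of Cantor space. -/
def TuringLE (f g : ℕ → Bool) : Prop :=
  RecursiveInNat (fun n => (g n).toNat) ((fun n => (f n).toNat : ℕ → ℕ) : ℕ →. ℕ)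

/-- `Y` is an `R`-adequate set: `Y ⊆ range R` and every `x ∈ dom R` is `R`-related
to some member of `Y`. -/
def Adequate (R : (ℕ → Bool) → (ℕ → Bool) → Prop) (Y : Set (ℕ → Bool)) : Prop :=
  (∀ y ∈ Y, ∃ x, R x y) ∧ ∀ x, (∃ y, R x y) → ∃ y ∈ Y, R x y

/-- `η` is needed for `R`: every `R`-adequate set contains an element computing `η`. -/
def Needed (η : ℕ → Bool) (R : (ℕ → Bool) → (ℕ → Bool) → Prop) : Prop :=
  ∀ Y : Set (ℕ → Bool), Adequate R Y → ∃ y ∈ Y, TuringLE η y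

theorem stmt_3 (η : ℕ → Bool) (R : (ℕ → Bool) → (ℕ → Bool) → Prop) :
    Needed η R ↔ ∃ x, (∃ y, R x y) ∧ ∀ y, R x y → TuringLE η y := by
  constructor
  · intro h
    by_contra hc
    push_neg at hc
    have key : ∀ x, (∃ y, R x y) → ∃ y, R x y ∧ ¬TuringLE η y := by
      intro x hx
      rcases hc x hx with ⟨y, hy, hny⟩
      exact ⟨y, hy, hny⟩
    set Y : Set (ℕ → Bool) := {y | (∃ x, R x y) ∧ ¬TuringLE η y} with hY
    have hadq : Adequate R Y := by
      constructor
      · intro y hy; exact hy.1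
      · intro x hx
        rcases key x hx with ⟨y, hy, hny⟩
        exact ⟨y, ⟨⟨x, hy⟩, hny⟩, hy⟩
    rcases h Y hadq with ⟨y, hyY, hT⟩
    exact hyY.2 hT
  · rintro ⟨x, ⟨y0, hxy0⟩, hall⟩ Y ⟨_, hdom⟩
    rcases hdom x ⟨y0, hxy0⟩ with ⟨y, hyY, hxy⟩
    exact ⟨y, hyY, hall y hxy⟩
end
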